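/- If s ∈ S(t) and y ∈ P_v(t) (y is a predecessor of t with respect to source v in G), then d'(s,y) = d(s,u) + ω'(u,v) + d(v,y), and y is a predecessor of t with respect to source s in G', i.e., y ∈ P'_s(t). -/

import Mathlib

open scoped BigOperators

/-- A directed graph on vertex set `V` with positive real edge weights. -/
structure WDigraph (V : Type*) where
  /-- the edge relation -/
  E : V → V → Prop
  /-- the edge weights -/
  w : V → V → ℝ
  /-- weights of edges are positive -/
  pos : ∀ a b, E a b → 0 < w a b

namespace WDigraph
set_option linter.unusedSectionVars false

variable {V : Type*} [Fintype V] [DecidableEq V]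

/-- `p` is a simple path from `s` to `t` in `G`: a nonempty list of pairwise
distinct vertices starting at `s`, ending at `t`, consecutive vertices joined
by edges. (Since all weights are positive, every shortest path is simple, so
it suffices to consider simple paths throughout.) -/
def IsPath (G : WDigraph V) (s t : V) (p : List V) : Prop :=
  List.Chain' G.E p ∧ p.head? = some s ∧ p.getLast? = some t ∧ p.Nodup

/-- The total weight of a list of vertices (sum of the weights of consecutive pairs). -/
def pw (G : WDigraph V) : List V → ℝ
  | [] => 0
  | [_] => 0
  | a :: b :: r => G.w a b + G.pw (b :: r)

/-- `d(s,t)`: shortest-path distance from `s` to `t`, equal to `⊤` (infinity)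
if `t` is unreachable from `s`. -/
noncomputable def dist (G : WDigraph V) (s t : V) : EReal :=
  sInf ((fun p => (G.pw p : EReal)) '' {p | G.IsPath s t p})

/-- The set of shortest `s`-`t` paths in `G`. -/
def SP (G : WDigraph V) (s t : V) : Set (List V) :=
  {p | G.IsPath s t p ∧ (G.pw p : EReal) = G.dist s t}

/-- `σ_{st}`: the number of shortest `s`-`t` paths in `G`. -/
noncomputable def sigma (G : WDigraph V) (s t : V) : ℕ :=
  (G.SP s t).ncard

/-- `σ_{st}(v)`: the number of shortest `s`-`t` paths in `G` that contain `v`. -/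
noncomputable def sigmaV (G : WDigraph V) (s t v : V) : ℕ :=
  {p ∈ G.SP s t | v ∈ p}.ncard

/-- `σ_{st}(v,w)`: the number of shortest `s`-`t` paths in `G` using the edge `(v,w)`. -/
noncomputable def sigmaE (G : WDigraph V) (s t v w : V) : ℕ :=
  {p ∈ G.SP s t | [v, w] <:+: p}.ncard

/-- `P_s(t)`: the set of predecessors of `t` with respect to source `s`:
nodes `y` with `(y,t) ∈ E` and `d(s,y) + ω(y,t) = d(s,t) < ∞`. -/
def pred (G : WDigraph V) (s t : V) : Set V :=
  {y | G.E y t ∧ G.dist s y + (G.w y t : EReal) = G.dist s t ∧ G.dist s t < ⊤}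

/-- `δ_{s•}(v)`: Brandes's one-sided dependency of `s` on `v`
(a summand is `0` whenever its denominator is `0`, which is automatic since
in Lean division by zero yields zero). -/
noncomputable def delta (G : WDigraph V) (s v : V) : ℝ :=
  ∑ᶠ t ∈ {t : V | t ≠ s ∧ t ≠ v}, (G.sigmaV s t v : ℝ) / (G.sigma s t : ℝ)

/-- `c_B(v)`: the betweenness centrality of `v`. -/
noncomputable def bc (G : WDigraph V) (v : V) : ℝ :=
  ∑ᶠ s ∈ {s : V | s ≠ v}, G.delta s v

/-- `G'` is obtained from `G` by the incremental update `(u, v, ω'(u,v))`: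
either a new edge `(u,v) ∉ E` is inserted with positive weight, or the weight
of the existing edge `(u,v)` is decreased; all other edges and weights are
unchanged. (Positivity of all weights is part of the `WDigraph` structure.) -/
structure IsUpdate (G G' : WDigraph V) (u v : V) : Prop where
  /-- the updated edge is present in `G'` -/
  edge' : G'.E u v
  /-- `E' = E ∪ {(u,v)}` -/
  edge_iff : ∀ a b, G'.E a b ↔ G.E a b ∨ a = u ∧ b = v
  /-- `ω'` agrees with `ω` on all edges other than `(u,v)` -/
  weight_eq : ∀ a b, ¬(a = u ∧ b = v) → G'.w a b = G.w a b
  /-- either an insertion of a new edge, or a weight decrease of an existing one -/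
  insert_or_decrease : ¬ G.E u v ∨ (G.E u v ∧ G'.w u v < G.w u v)

/-- `S(t)`: the affected sources of `t`. -/
def affS (G G' : WDigraph V) (t : V) : Set V :=
  {s | G.dist s t > G'.dist s t ∨ G.sigma s t ≠ G'.sigma s t}

/-- `T(s)`: the affected targets of `s`. -/
def affT (G G' : WDigraph V) (s : V) : Set V :=
  {t | G.dist s t > G'.dist s t ∨ G.sigma s t ≠ G'.sigma s t}

/-- `Δ_{s•}(v) = Σ_{t ∈ T(s), t ≠ v} σ_{st}(v)/σ_{st}`, computed in `G`
(`0`-convention for zero denominators). -/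
noncomputable def Delta (G G' : WDigraph V) (s v : V) : ℝ :=
  ∑ᶠ t ∈ {t : V | t ∈ affT G G' s ∧ t ≠ v}, (G.sigmaV s t v : ℝ) / (G.sigma s t : ℝ)

/-- `Δ'_{s•}(v) = Σ_{t ∈ T(s), t ≠ v} σ'_{st}(v)/σ'_{st}`, computed in `G'`
(`0`-convention for zero denominators). -/
noncomputable def Delta' (G G' : WDigraph V) (s v : V) : ℝ :=
  ∑ᶠ t ∈ {t : V | t ∈ affT G G' s ∧ t ≠ v}, (G'.sigmaV s t v : ℝ) / (G'.sigma s t : ℝ)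


lemma ereal_exists_real {x : EReal} (h1 : x ≠ ⊥) (h2 : x ≠ ⊤) : ∃ r : ℝ, x = (r : EReal) := by
  induction x using EReal.rec with
  | bot => exact absurd rfl h1
  | coe r => exact ⟨r, rfl⟩
  | top => exact absurd rfl h2

lemma chain'_imp_mem {α : Type*} {R S : α → α → Prop} : ∀ {p : List α},
    (∀ a b, a ∈ p → b ∈ p → R a b → S a b) → List.Chain' R p → List.Chain' S p := by
  intro p
  induction p with
  | nil => intro _ _; exact List.isChain_nil
  | cons a rest ih =>
    intro H h
    cases rest with
    | nil => exact List.isChain_singleton _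
    | cons b r =>
      simp only [List.Chain', List.isChain_cons_cons] at h ⊢
      exact ⟨H a b (by simp) (by simp) h.1,
        ih (fun x y hx hy => H x y (by simp [hx]) (by simp [hy])) h.2⟩

lemma chain'_and {α : Type*} {R S : α → α → Prop} : ∀ {p : List α},
    List.Chain' R p → List.Chain' S p → List.Chain' (fun a b => R a b ∧ S a b) p := by
  intro p
  induction p with
  | nil => intro _ _; exact List.isChain_nil
  | cons a rest ih =>
    intro h1 h2
    cases rest with
    | nil => exact List.isChain_singleton _
    | cons b r =>
      simp only [List.Chain', List.isChain_cons_cons] at h1 h2 ⊢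
      exact ⟨⟨h1.1, h2.1⟩, ih h1.2 h2.2⟩

lemma chain'_not_pair {α : Type*} {a₀ b₀ : α} : ∀ {p : List α},
    (∀ l m, p ≠ l ++ a₀ :: b₀ :: m) →
    List.Chain' (fun a b => ¬(a = a₀ ∧ b = b₀)) p := by
  intro p
  induction p with
  | nil => intro _; exact List.isChain_nil
  | cons a rest ih =>
    intro H
    cases rest with
    | nil => exact List.isChain_singleton _
    | cons b r =>
      simp only [List.Chain', List.isChain_cons_cons]
      refine ⟨fun hab => H [] r (by simp [hab.1, hab.2]), ih (fun l m he => H (a :: l) m ?_)⟩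
      rw [List.cons_append, ← he]

lemma pw_le_pw (G₁ G₂ : WDigraph V) : ∀ {p : List V},
    List.Chain' (fun a b => G₁.w a b ≤ G₂.w a b) p → G₁.pw p ≤ G₂.pw p := by
  intro p
  induction p with
  | nil => intro _; simp [pw]
  | cons a rest ih =>
    intro h
    cases rest with
    | nil => simp [pw]
    | cons b r =>
      simp only [List.Chain', List.isChain_cons_cons] at h
      exact add_le_add h.1 (ih h.2)

lemma pw_congr {G₁ G₂ : WDigraph V} {p : List V}
    (h : List.Chain' (fun a b => G₁.w a b = G₂.w a b) p) : G₁.pw p = G₂.pw p :=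
  le_antisymm (pw_le_pw G₁ G₂ (h.imp fun _ _ e => e.le))
    (pw_le_pw G₂ G₁ (h.imp fun _ _ e => e.ge))

lemma pw_nonneg {G : WDigraph V} : ∀ {p : List V}, List.Chain' G.E p → 0 ≤ G.pw p := by
  intro p
  induction p with
  | nil => intro _; simp [pw]
  | cons a rest ih =>
    intro h
    cases rest with
    | nil => simp [pw]
    | cons b r =>
      simp only [List.Chain', List.isChain_cons_cons] at h
      exact add_nonneg (G.pos a b h.1).le (ih h.2)

lemma pw_append (G : WDigraph V) (y : V) (m : List V) : ∀ (l : List V),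
    G.pw (l ++ y :: m) = G.pw (l ++ [y]) + G.pw (y :: m)
  | [] => by simp [pw]
  | [a] => by simp [pw]
  | a :: b :: l => by
      have h := pw_append G y m (b :: l)
      simp only [List.cons_append] at h
      show G.w a b + G.pw (b :: (l ++ y :: m)) = G.w a b + G.pw (b :: (l ++ [y])) + G.pw (y :: m)
      rw [h]; ring

lemma dist_le_pw {G : WDigraph V} {s t : V} {p : List V} (hp : G.IsPath s t p) :
    G.dist s t ≤ (G.pw p : EReal) :=
  sInf_le ⟨p, hp, rfl⟩

lemma dist_nonneg (G : WDigraph V) (s t : V) : (0 : EReal) ≤ G.dist s t := by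
  refine le_sInf ?_
  rintro x ⟨p, hp, rfl⟩
  exact EReal.coe_nonneg.mpr (pw_nonneg hp.1)

lemma dist_ne_bot (G : WDigraph V) (s t : V) : G.dist s t ≠ ⊥ := by
  intro h
  have := dist_nonneg G s t
  rw [h] at this
  simp at this

lemma dist_self_nonpos (G : WDigraph V) (v : V) : G.dist v v ≤ 0 := by
  have : G.IsPath v v [v] := ⟨List.isChain_singleton _, rfl, rfl, by simp⟩
  have h := dist_le_pw this
  simpa [pw] using h

lemma exists_shortest {G : WDigraph V} {s t : V} (h : G.dist s t < ⊤) :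
    ∃ p, G.IsPath s t p ∧ (G.pw p : EReal) = G.dist s t := by
  have hfin : ((fun p => (G.pw p : EReal)) '' {p | G.IsPath s t p}).Finite := by
    refine Set.Finite.image _ (Set.Finite.subset (List.finite_length_le V (Fintype.card V)) ?_)
    exact fun p hp => hp.2.2.2.length_le_card
  have hne : ((fun p => (G.pw p : EReal)) '' {p | G.IsPath s t p}).Nonempty := by
    by_contra hne
    rw [Set.not_nonempty_iff_eq_empty] at hne
    rw [dist, hne, sInf_empty] at h
    exact lt_irrefl _ h
  obtain ⟨p, hp, hpe⟩ := hne.csInf_mem hfin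
  exact ⟨p, hp, hpe⟩

lemma exists_nodup_walk_aux (G : WDigraph V) : ∀ (n : ℕ) (p : List V), p.length ≤ n →
    List.Chain' G.E p →
    ∃ q, q.Sublist p ∧ q.Nodup ∧ List.Chain' G.E q ∧ q.head? = p.head? ∧
      q.getLast? = p.getLast? ∧ G.pw q ≤ G.pw p := by
  intro n
  induction n with
  | zero =>
    intro p hp _
    rw [Nat.le_zero, List.length_eq_zero_iff] at hp
    subst hp
    exact ⟨[], by simp [pw]; exact List.isChain_nil⟩
  | succ n ih =>
    intro p hp hc
    match p with
    | [] => exact ⟨[], by simp [pw]; exact List.isChain_nil⟩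
    | a :: rest =>
      by_cases ha : a ∈ rest
      · obtain ⟨m, r, hmr⟩ := List.append_of_mem ha
        subst hmr
        have hsuf : (a :: r) <:+ (a :: (m ++ a :: r)) := ⟨a :: m, by simp⟩
        have hlen : (a :: r).length ≤ n := by
          simp only [List.length_cons, List.length_append] at hp ⊢
          omega
        obtain ⟨q, hq1, hq2, hq3, hq4, hq5, hq6⟩ := ih (a :: r) hlen (hc.suffix hsuf)
        refine ⟨q, hq1.trans hsuf.sublist, hq2, hq3, by simpa using hq4, ?_, ?_⟩
        · rw [hq5]
          have h1 : (a :: (m ++ a :: r)) = (a :: m) ++ (a :: r) := by simp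
          rw [h1, List.getLast?_append, List.getLast?_eq_getLast (l := a :: r) (by simp)]
          rfl
        · refine hq6.trans ?_
          have h1 : (a :: (m ++ a :: r)) = (a :: m) ++ a :: r := by simp
          rw [h1, pw_append G a r (a :: m)]
          have h2 : 0 ≤ G.pw ((a :: m) ++ [a]) := by
            refine pw_nonneg (hc.prefix ?_)
            exact ⟨r, by simp⟩
          linarith
      · cases rest with
        | nil => exact ⟨[a], by simp [pw]; exact List.isChain_singleton _⟩
        | cons b r' =>
          have hlen : (b :: r').length ≤ n := by
            simp only [List.length_cons] at hp ⊢
            omega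
          simp only [List.Chain', List.isChain_cons_cons] at hc
          obtain ⟨q, hq1, hq2, hq3, hq4, hq5, hq6⟩ := ih (b :: r') hlen hc.2
          cases q with
          | nil => simp at hq4
          | cons c q'' =>
            have hcb : c = b := by simpa using hq4
            subst hcb
            refine ⟨a :: c :: q'', List.Sublist.cons₂ a hq1, ?_, ?_, rfl, ?_, ?_⟩
            · exact List.nodup_cons.mpr ⟨fun hmem => ha (hq1.subset hmem), hq2⟩
            · exact List.isChain_cons_cons.mpr ⟨hc.1, hq3⟩
            · rw [List.getLast?_cons_cons, List.getLast?_cons_cons, hq5]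
            · show G.w a c + G.pw (c :: q'') ≤ G.w a c + G.pw (c :: r')
              linarith

lemma exists_nodup_walk (G : WDigraph V) (p : List V) (hc : List.Chain' G.E p) :
    ∃ q, q.Sublist p ∧ q.Nodup ∧ List.Chain' G.E q ∧ q.head? = p.head? ∧
      q.getLast? = p.getLast? ∧ G.pw q ≤ G.pw p :=
  exists_nodup_walk_aux G p.length p le_rfl hc

lemma dist_le_of_walk {G : WDigraph V} {s t : V} {p : List V} (hc : List.Chain' G.E p)
    (hh : p.head? = some s) (hl : p.getLast? = some t) : G.dist s t ≤ (G.pw p : EReal) := by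
  obtain ⟨q, _, hq2, hq3, hq4, hq5, hq6⟩ := exists_nodup_walk G p hc
  refine (dist_le_pw ⟨hq3, hq4.trans hh, hq5.trans hl, hq2⟩).trans ?_
  exact_mod_cast hq6



lemma transfer_to_G {G G' : WDigraph V} {u v : V} (h : IsUpdate G G' u v) {p : List V}
    (hc : List.Chain' (fun a b => G'.E a b ∧ ¬(a = u ∧ b = v)) p) :
    List.Chain' G.E p ∧ G'.pw p = G.pw p :=
  ⟨hc.imp (fun a b hab => ((h.edge_iff a b).mp hab.1).resolve_right hab.2),
   pw_congr (hc.imp fun a b hab => h.weight_eq a b hab.2)⟩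

lemma transfer_to_G' {G G' : WDigraph V} {u v : V} (h : IsUpdate G G' u v) {p : List V}
    (hc : List.Chain' G.E p) : List.Chain' G'.E p ∧ G'.pw p ≤ G.pw p := by
  refine ⟨hc.imp (fun a b hab => (h.edge_iff a b).mpr (Or.inl hab)), pw_le_pw G' G (hc.imp ?_)⟩
  intro a b hab
  by_cases huv : a = u ∧ b = v
  · obtain ⟨rfl, rfl⟩ := huv
    rcases h.insert_or_decrease with h1 | h1
    · exact absurd hab h1
    · exact h1.2.le
  · exact (h.weight_eq a b huv).le

lemma dist'_le_dist {G G' : WDigraph V} {u v : V} (h : IsUpdate G G' u v) (a b : V) :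
    G'.dist a b ≤ G.dist a b := by
  refine le_sInf ?_
  rintro x ⟨p, hp, rfl⟩
  obtain ⟨hc', hle⟩ := transfer_to_G' h hp.1
  exact (dist_le_pw ⟨hc', hp.2.1, hp.2.2.1, hp.2.2.2⟩).trans (EReal.coe_le_coe_iff.mpr hle)

lemma dist'_le_concat {G G' : WDigraph V} {u v : V} (h : IsUpdate G G' u v)
    {s z : V} {q1 q2 : List V} (h1 : G.IsPath s u q1) (h2 : G.IsPath v z q2) :
    G'.dist s z ≤ ((G.pw q1 + G'.w u v + G.pw q2 : ℝ) : EReal) := by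
  obtain ⟨hc1, hh1, hl1, hn1⟩ := h1
  obtain ⟨hc2, hh2, hl2, hn2⟩ := h2
  have hq1ne : q1 ≠ [] := by intro he; rw [he] at hh1; simp at hh1
  obtain ⟨m2, rfl⟩ : ∃ m2, q2 = v :: m2 := by
    cases q2 with
    | nil => simp at hh2
    | cons c m2 =>
      have hcv : c = v := by simpa using hh2
      exact ⟨m2, by rw [hcv]⟩
  have hch : List.Chain' G'.E (q1 ++ v :: m2) := by
    refine List.IsChain.append (transfer_to_G' h hc1).1 (transfer_to_G' h hc2).1 ?_
    intro x hx y' hy'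
    rw [hl1] at hx
    obtain rfl := Option.mem_some_iff.mp hx
    obtain rfl : v = y' := by simpa using hy'
    exact h.edge'
  have hsz : G'.dist s z ≤ (G'.pw (q1 ++ v :: m2) : EReal) := by
    refine dist_le_of_walk hch ?_ ?_
    · rw [List.head?_append, hh1]; rfl
    · rw [List.getLast?_append, hl2]; rfl
  refine hsz.trans ?_
  rw [EReal.coe_le_coe_iff]
  have hgl : q1.getLast hq1ne = u := by
    have h5 := List.getLast?_eq_getLast (l := q1) hq1ne
    rw [hl1] at h5
    exact (Option.some_inj.mp h5).symm
  have hq1d : q1.dropLast ++ [u] = q1 := by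
    conv_rhs => rw [← List.dropLast_append_getLast hq1ne]
    rw [hgl]
  have key : q1 ++ v :: m2 = q1.dropLast ++ u :: v :: m2 := by
    rw [← hq1d]; simp
  have e1 : G'.pw (q1 ++ v :: m2) = G'.pw q1 + (G'.w u v + G'.pw (v :: m2)) := by
    rw [key, pw_append G' u (v :: m2) q1.dropLast, hq1d]
    rfl
  rw [e1]
  have hb1 := (transfer_to_G' h hc1).2
  have hb2 := (transfer_to_G' h hc2).2
  linarith

/-- If `s ∈ S(t)` and `y ∈ P_v(t)` (a predecessor of `t` with respect
to source `v` in `G`), then `d'(s,y) = d(s,u) + ω'(u,v) + d(v,y)`, and `y` is a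
predecessor of `t` with respect to source `s` in `G'`, i.e. `y ∈ P'_s(t)`. -/
theorem pred_mem_pred'_of_affS (G G' : WDigraph V) (u v : V)
    (h : IsUpdate G G' u v) (s t y : V) (hs : s ∈ affS G G' t)
    (hy : y ∈ G.pred v t) :
    G'.dist s y = G.dist s u + (G'.w u v : EReal) + G.dist v y ∧
      y ∈ G'.pred s t := by
  obtain ⟨hyt, hyd, hvt⟩ := hy
  obtain ⟨dt, hdt⟩ := ereal_exists_real (dist_ne_bot G v t) (ne_top_of_lt hvt)
  have hvy_ne_top : G.dist v y ≠ ⊤ := by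
    intro htop
    rw [htop, EReal.top_add_coe] at hyd
    rw [← hyd] at hvt
    exact lt_irrefl _ hvt
  obtain ⟨dy, hdy⟩ := ereal_exists_real (dist_ne_bot G v y) hvy_ne_top
  have hdyt : dy + G.w y t = dt := by
    rw [hdy, hdt, ← EReal.coe_add, EReal.coe_eq_coe_iff] at hyd
    exact hyd
  have hdy0 : 0 ≤ dy := by
    have h0 := dist_nonneg G v y
    rw [hdy] at h0
    exact EReal.coe_nonneg.mp h0
  have htv : t ≠ v := by
    rintro rfl
    have h0 := dist_self_nonpos G t
    rw [hdt] at h0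
    have hdt0 : dt ≤ 0 := by exact_mod_cast h0
    linarith [G.pos y t hyt]
  have hyuv : ¬(y = u ∧ t = v) := fun hc => htv hc.2
  rcases hs with hs
  have claimA : ∃ l m, G'.IsPath s t (l ++ u :: v :: m) ∧
      (G'.pw (l ++ u :: v :: m) : EReal) = G'.dist s t := by
    by_contra hA
    push_neg at hA
    have key : ∀ p, G'.IsPath s t p → (G'.pw p : EReal) = G'.dist s t →
        List.Chain' G.E p ∧ G'.pw p = G.pw p := by
      intro p hp hw
      have hnp : ∀ l m, p ≠ l ++ u :: v :: m := by
        intro l m he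
        exact hA l m (by rw [← he]; exact hp) (by rw [← he]; exact hw)
      exact transfer_to_G h (chain'_and hp.1 (chain'_not_pair hnp))
    have hdd : G'.dist s t = G.dist s t := by
      refine le_antisymm (dist'_le_dist h s t) ?_
      by_cases htop : G'.dist s t = ⊤
      · rw [htop]; exact le_top
      · obtain ⟨p, hp, hpw⟩ := exists_shortest (lt_top_iff_ne_top.mpr htop)
        obtain ⟨hcG, hpw_eq⟩ := key p hp hpw
        have h4 : G.dist s t ≤ (G.pw p : EReal) := dist_le_pw ⟨hcG, hp.2.1, hp.2.2.1, hp.2.2.2⟩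
        rw [← hpw_eq, hpw] at h4
        exact h4
    have hSP : G.SP s t = G'.SP s t := by
      ext p
      constructor
      · rintro ⟨hp, hw⟩
        obtain ⟨hc', hle⟩ := transfer_to_G' h hp.1
        have hp' : G'.IsPath s t p := ⟨hc', hp.2.1, hp.2.2.1, hp.2.2.2⟩
        refine ⟨hp', le_antisymm ?_ (dist_le_pw hp')⟩
        calc (G'.pw p : EReal) ≤ (G.pw p : EReal) := by exact_mod_cast hle
          _ = G.dist s t := hw
          _ = G'.dist s t := hdd.symm
      · rintro ⟨hp, hw⟩
        obtain ⟨hcG, hpw_eq⟩ := key p hp hw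
        refine ⟨⟨hcG, hp.2.1, hp.2.2.1, hp.2.2.2⟩, ?_⟩
        rw [← hpw_eq, hw, hdd]
    rcases hs with hlt | hne
    · rw [hdd] at hlt; exact lt_irrefl _ hlt
    · exact hne (congrArg Set.ncard hSP)
  obtain ⟨l, m, hP, hW⟩ := claimA
  obtain ⟨hch, hhead, hlast, hnd⟩ := hP
  have hpe : l ++ u :: v :: m = (l ++ [u]) ++ v :: m := by simp
  rw [hpe] at hch hhead hlast hnd hW
  rw [List.nodup_append] at hnd
  obtain ⟨hnd1, hnd2, hdisj⟩ := hnd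
  have hvl : v ∉ l ++ [u] := fun hv => hdisj v hv v (by simp) rfl
  have hum : u ∉ v :: m := fun hu => hdisj u (by simp) u hu rfl
  have hch1 : List.Chain' G'.E (l ++ [u]) := hch.prefix ⟨v :: m, rfl⟩
  have hch2 : List.Chain' G'.E (v :: m) := hch.suffix ⟨l ++ [u], rfl⟩
  have ht1 := transfer_to_G h
    (chain'_imp_mem (fun a b _ hb hE => ⟨hE, fun hab => hvl (hab.2 ▸ hb)⟩) hch1)
  have ht2 := transfer_to_G h
    (chain'_imp_mem (fun a b ha _ hE => ⟨hE, fun hab => hum (hab.1 ▸ ha)⟩) hch2)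
  have hne1 : l ++ [u] ≠ [] := by simp
  have hh1 : (l ++ [u]).head? = some s := by
    rw [List.head?_append, List.head?_eq_head hne1] at hhead
    rw [List.head?_eq_head hne1]
    exact hhead
  have hl1 : (l ++ [u]).getLast? = some u := List.getLast?_concat (l := l)
  have hl2 : (v :: m).getLast? = some t := by
    rw [List.getLast?_append, List.getLast?_eq_getLast (l := v :: m) (by simp)] at hlast
    rw [List.getLast?_eq_getLast (l := v :: m) (by simp)]
    exact hlast
  have hP1 : G.IsPath s u (l ++ [u]) := ⟨ht1.1, hh1, hl1, hnd1⟩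
  have hP2 : G.IsPath v t (v :: m) := ⟨ht2.1, rfl, hl2, hnd2⟩
  have hdsu_le : G.dist s u ≤ (G.pw (l ++ [u]) : EReal) := dist_le_pw hP1
  obtain ⟨du, hdu⟩ := ereal_exists_real (dist_ne_bot G s u) (by
    intro htop
    rw [htop, top_le_iff] at hdsu_le
    exact EReal.coe_ne_top _ hdsu_le)
  have hdu_le : du ≤ G.pw (l ++ [u]) := by
    rw [hdu] at hdsu_le
    exact EReal.coe_le_coe_iff.mp hdsu_le
  have hdvt_le : dt ≤ G.pw (v :: m) := by
    have h5 := dist_le_pw hP2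
    rw [hdt] at h5
    exact EReal.coe_le_coe_iff.mp h5
  have hW2 : G'.pw ((l ++ [u]) ++ v :: m) = G'.pw (l ++ [u]) + (G'.w u v + G'.pw (v :: m)) := by
    have k : (l ++ [u]) ++ v :: m = l ++ u :: v :: m := by simp
    rw [k, pw_append G' u (v :: m) l]
    rfl
  obtain ⟨q1, hq1, hq1w⟩ := exists_shortest (lt_of_le_of_lt hdsu_le (EReal.coe_lt_top _))
  obtain ⟨q2, hq2, hq2w⟩ := exists_shortest hvt
  obtain ⟨q3, hq3, hq3w⟩ := exists_shortest (lt_top_iff_ne_top.mpr hvy_ne_top)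
  have hq1r : G.pw q1 = du := by
    rw [hdu] at hq1w
    exact EReal.coe_eq_coe_iff.mp hq1w
  have hq2r : G.pw q2 = dt := by
    rw [hdt] at hq2w
    exact EReal.coe_eq_coe_iff.mp hq2w
  have hq3r : G.pw q3 = dy := by
    rw [hdy] at hq3w
    exact EReal.coe_eq_coe_iff.mp hq3w
  have hDst : G'.dist s t = ((du + G'.w u v + dt : ℝ) : EReal) := by
    have hb := dist'_le_concat h hq1 hq2
    rw [hq1r, hq2r] at hb
    refine le_antisymm hb ?_
    rw [← hW, hW2, ht1.2, ht2.2]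
    exact EReal.coe_le_coe_iff.mpr (by linarith)
  have hby : G'.dist s y ≤ ((du + G'.w u v + dy : ℝ) : EReal) := by
    have h5 := dist'_le_concat h hq1 hq3
    rw [hq1r, hq3r] at h5
    exact h5
  obtain ⟨e, he⟩ := ereal_exists_real (dist_ne_bot G' s y) (by
    intro htop
    rw [htop, top_le_iff] at hby
    exact EReal.coe_ne_top _ hby)
  have he_le : e ≤ du + G'.w u v + dy := by
    rw [he] at hby
    exact EReal.coe_le_coe_iff.mp hby
  obtain ⟨r, hr, hrw⟩ := exists_shortest (he ▸ EReal.coe_lt_top e)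
  have hrr : G'.pw r = e := by
    rw [he] at hrw
    exact EReal.coe_eq_coe_iff.mp hrw
  obtain ⟨hrc, hrh, hrl, hrn⟩ := hr
  have hrne : r ≠ [] := by intro hem; rw [hem] at hrh; simp at hrh
  have hrlast : r.getLast hrne = y := by
    have h5 := List.getLast?_eq_getLast (l := r) hrne
    rw [hrl] at h5
    exact (Option.some_inj.mp h5).symm
  have hrd : r.dropLast ++ [y] = r := by
    conv_rhs => rw [← List.dropLast_append_getLast hrne]
    rw [hrlast]
  have hkey : r ++ [t] = r.dropLast ++ y :: [t] := by
    rw [← hrd]; simp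
  have hwalk : G'.dist s t ≤ (G'.pw (r ++ [t]) : EReal) := by
    refine dist_le_of_walk ?_ ?_ ?_
    · refine List.IsChain.append hrc (List.isChain_singleton t) ?_
      intro x hx y' hy'
      rw [hrl] at hx
      obtain rfl := Option.mem_some_iff.mp hx
      obtain rfl : t = y' := by simpa using hy'
      exact (h.edge_iff y t).mpr (Or.inl hyt)
    · rw [List.head?_append, hrh]; rfl
    · exact List.getLast?_concat (l := r)
  have hpwwalk : G'.pw (r ++ [t]) = e + G.w y t := by
    rw [hkey, pw_append G' y [t] r.dropLast, hrd, hrr]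
    show e + (G'.w y t + G'.pw [t]) = e + G.w y t
    rw [h.weight_eq y t hyuv]
    simp [pw]
  have hge : du + G'.w u v + dy ≤ e := by
    rw [hDst, hpwwalk] at hwalk
    have h5 := EReal.coe_le_coe_iff.mp hwalk
    linarith
  have hee : e = du + G'.w u v + dy := le_antisymm he_le hge
  refine ⟨?_, (h.edge_iff y t).mpr (Or.inl hyt), ?_, ?_⟩
  · rw [he, hee, hdu, hdy]
    norm_cast
  · rw [he, hee, h.weight_eq y t hyuv, hDst, ← EReal.coe_add, EReal.coe_eq_coe_iff]
    linarith
  · rw [hDst]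
    exact EReal.coe_lt_top _


end WDigraph
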